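/- arXiv:2011.03368 — 3 statements merged into one kernel-verified Lean document; each statement's English description precedes it below -/
import Mathlib

section
/- Let Z = ∑_{i=1}^m X_i where each X_i is a nonnegative random variable with 1/X_i ~ χ²_{4(n−m+1)} (not necessarily independent), and n−m ≥ 1. Then for every t ≥ 1, P{ Z > (3m/(4(n−m+1)))·t } ≤ t^{−2(n−m)}. -/
open scoped Quaternion
open Matrix MeasureTheory ProbabilityTheory
open scoped ENNReal

noncomputable section

/-- The 4×4 real table of a quaternion used in the real counterpart. -/
def upsEntry (q : ℍ[ℝ]) : Matrix (Fin 4) (Fin 4) ℝ :=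
  !![q.re, -q.imI, -q.imJ, -q.imK;
     q.imI, q.re, -q.imK, q.imJ;
     q.imJ, q.imK, q.re, -q.imI;
     q.imK, -q.imJ, q.imI, q.re]

/-- Real counterpart `Υ_Q` of a quaternion matrix. -/
def Ups {m n : ℕ} (Q : Matrix (Fin m) (Fin n) ℍ[ℝ]) :
    Matrix (Fin 4 × Fin m) (Fin 4 × Fin n) ℝ :=
  fun p q => upsEntry (Q p.2 q.2) p.1 q.1

/-- Squared Frobenius norm of a quaternion matrix. -/
def frobSqQ {m n : ℕ} (A : Matrix (Fin m) (Fin n) ℍ[ℝ]) : ℝ :=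
  ∑ i, ∑ j, ‖A i j‖ ^ 2

/-- Frobenius norm of a quaternion matrix. -/
def frobQ {m n : ℕ} (A : Matrix (Fin m) (Fin n) ℍ[ℝ]) : ℝ :=
  Real.sqrt (frobSqQ A)

/-- Frobenius norm of a real matrix. -/
def frobR {α β : Type*} [Fintype α] [Fintype β] (M : Matrix α β ℝ) : ℝ :=
  Real.sqrt (∑ i, ∑ j, (M i j) ^ 2)

/-- Spectral norm of a real matrix: operator norm on Euclidean spaces. -/
def specR {α β : Type*} [Fintype α] [Fintype β] [DecidableEq β] (M : Matrix α β ℝ) : ℝ :=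
  ‖LinearMap.toContinuousLinearMap (Matrix.toEuclideanLin M)‖

/-- Spectral norm (largest singular value) of a quaternion matrix, defined as the
operator 2-norm of the induced map. -/
def specQ {m n : ℕ} (A : Matrix (Fin m) (Fin n) ℍ[ℝ]) : ℝ :=
  sSup {r : ℝ | ∃ x : Fin n → ℍ[ℝ], ∑ i, ‖x i‖ ^ 2 = 1 ∧
    r = Real.sqrt (∑ i, ‖A.mulVec x i‖ ^ 2)}


/-- Components of a quaternion as a `Fin 4`-indexed family. -/
def qcomp (a : Fin 4) (q : ℍ[ℝ]) : ℝ := ![q.re, q.imI, q.imJ, q.imK] a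

/-- Chi-squared distribution with `k` degrees of freedom, as a Gamma distribution. -/
def chiSq (k : ℕ) : Measure ℝ := gammaMeasure ((k : ℝ) / 2) (1 / 2)
lemma auxExp (x : ℝ) (hx : 0 < x) (k : ℕ) (hk : (k:ℝ) ≤ x) : (x+1)^k ≤ 3 * x^k := by
  have h1 : (x+1)^k = x^k * (1+1/x)^k := by
    rw [← mul_pow]; congr 1; field_simp
  have h2 : (1+1/x)^k ≤ Real.exp (1/x) ^ k := by
    apply pow_le_pow_left₀ (by positivity)
    have := Real.add_one_le_exp (1/x); linarith
  have h3 : Real.exp (1/x) ^ k = Real.exp (k * (1/x)) := (Real.exp_nat_mul _ k).symm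
  have h4 : Real.exp ((k:ℝ) * (1/x)) ≤ Real.exp 1 := by
    apply Real.exp_le_exp.mpr
    rw [mul_one_div]
    exact (div_le_one hx).mpr hk
  have h5 : Real.exp 1 ≤ 3 := le_of_lt (lt_of_lt_of_le Real.exp_one_lt_d9 (by norm_num))
  have hxk : (0:ℝ) ≤ x^k := by positivity
  nlinarith

lemma arithA : ∀ q : ℕ, 1 ≤ q → ((q:ℝ)+2)^q ≤ 3^q * (Nat.factorial (q+1)) := by
  intro q hq
  induction q, hq using Nat.le_induction with
  | base => norm_num [Nat.factorial]
  | succ q hq ih =>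
    have step : ((q:ℝ)+1+2)^(q+1) ≤ 3 * ((q:ℝ)+2)^(q+1) := by
      have := auxExp ((q:ℝ)+2) (by positivity) (q+1) (by push_cast; linarith)
      calc ((q:ℝ)+1+2)^(q+1) = (((q:ℝ)+2)+1)^(q+1) := by ring_nf
        _ ≤ 3 * ((q:ℝ)+2)^(q+1) := this
    have hfact : (Nat.factorial (q+1+1) : ℝ) = ((q:ℝ)+2) * (Nat.factorial (q+1)) := by
      rw [Nat.factorial_succ]; push_cast; ring
    push_cast
    calc ((q:ℝ)+1+2)^(q+1) ≤ 3 * ((q:ℝ)+2)^(q+1) := step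
      _ = 3 * (((q:ℝ)+2) * ((q:ℝ)+2)^q) := by ring
      _ ≤ 3 * (((q:ℝ)+2) * (3^q * (Nat.factorial (q+1)))) := by
          have h2 : (0:ℝ) ≤ (q:ℝ)+2 := by positivity
          nlinarith [ih]
      _ = 3^(q+1) * ((Nat.factorial (q+1+1)):ℝ) := by rw [hfact]; ring

lemma chiSq_prob (k : ℕ) (hk : 1 ≤ k) : IsProbabilityMeasure (chiSq k) := by
  refine isProbabilityMeasure_gammaMeasure ?_ (by norm_num)
  have : (1:ℝ) ≤ (k:ℝ) := by exact_mod_cast hk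
  linarith

lemma aemeas_inv_of_law {Ωs : Type*} [MeasurableSpace Ωs] (μ : Measure Ωs)
    [IsProbabilityMeasure μ] (X : Ωs → ℝ) (k : ℕ) (hk : 1 ≤ k)
    (hlaw : Measure.map (fun ω => 1 / X ω) μ = chiSq k) :
    AEMeasurable (fun ω => 1 / X ω) μ := by
  by_contra h
  rw [Measure.map_of_not_aemeasurable h] at hlaw
  have := (chiSq_prob k hk).measure_univ
  rw [← hlaw] at this
  simp at this

lemma aemeas_of_law {Ωs : Type*} [MeasurableSpace Ωs] (μ : Measure Ωs)
    [IsProbabilityMeasure μ] (X : Ωs → ℝ) (k : ℕ) (hk : 1 ≤ k)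
    (hlaw : Measure.map (fun ω => 1 / X ω) μ = chiSq k) :
    AEMeasurable X μ := by
  have h := (aemeas_inv_of_law μ X k hk hlaw).inv
  simpa only [one_div, Pi.inv_def, inv_inv] using h

lemma moment_eq {Ωs : Type*} [MeasurableSpace Ωs] (μ : Measure Ωs)
    [IsProbabilityMeasure μ] (X : Ωs → ℝ) (d : ℕ) (hd : 1 ≤ d)
    (hlaw : Measure.map (fun ω => 1 / X ω) μ = chiSq (4 * (d + 1))) :
    ∫⁻ ω, ENNReal.ofReal (X ω) ^ (2*d) ∂μ
      = ENNReal.ofReal ((1/2)^(2*d) / (Nat.factorial (2*d+1))) := by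
  have hk : 1 ≤ 4*(d+1) := by omega
  have hinv : AEMeasurable (fun ω => 1 / X ω) μ := aemeas_inv_of_law μ X _ hk hlaw
  set g : ℝ → ℝ≥0∞ := fun y => ENNReal.ofReal (y⁻¹) ^ (2*d) with hg
  have hgm : Measurable g := (ENNReal.measurable_ofReal.comp measurable_inv).pow_const _
  set α : ℝ := ((4*(d+1) : ℕ) : ℝ)/2 with hαdef
  have hΓpos : 0 < Real.Gamma α := by
    apply Real.Gamma_pos_of_pos; rw [hαdef]; positivity
  set C : ℝ := (1/2)^(2*d) / (Nat.factorial (2*d+1)) with hC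
  have hptwise : ∀ y : ℝ, gammaPDF α (1/2) y * g y
      = ENNReal.ofReal C * gammaPDF 2 (1/2) y := by
    intro y
    rcases lt_trichotomy y 0 with hy | hy | hy
    · rw [gammaPDF_of_neg hy, gammaPDF_of_neg hy, zero_mul, mul_zero]
    · subst hy
      have h1 : g 0 = 0 := by
        simp [hg, pow_eq_zero_iff, Nat.mul_ne_zero, hd]
        omega
      have h2 : gammaPDF 2 (1/2) (0:ℝ) = 0 := by
        rw [gammaPDF_of_nonneg le_rfl]
        rw [Real.zero_rpow (by norm_num : (2:ℝ)-1 ≠ 0)]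
        simp
      rw [h1, h2, mul_zero, mul_zero]
    · have hy0 : (0:ℝ) ≤ y := hy.le
      rw [gammaPDF_of_nonneg hy0, gammaPDF_of_nonneg hy0]
      have hgy : g y = ENNReal.ofReal ((y⁻¹)^(2*d)) := by
        rw [hg, ENNReal.ofReal_pow (by positivity)]
      rw [hgy, ← ENNReal.ofReal_mul (by positivity), ← ENNReal.ofReal_mul (by rw [hC]; positivity)]
      congr 1
      have hα2 : α = ((2*d+1 : ℕ) : ℝ) + 1 := by rw [hαdef]; push_cast; ring
      have hΓα : Real.Gamma α = (Nat.factorial (2*d+1) : ℝ) := by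
        rw [hα2, Real.Gamma_nat_eq_factorial]
      have hrpow1 : (1/2:ℝ) ^ α = (1/2:ℝ) ^ (2*d+2 : ℕ) := by
        rw [hαdef]
        rw [show (((4*(d+1):ℕ)):ℝ)/2 = ((2*d+2 : ℕ):ℝ) by push_cast; ring]
        exact Real.rpow_natCast _ _
      have hrpow2 : y ^ (α - 1) = y ^ (2*d+1 : ℕ) := by
        rw [hα2]
        rw [show ((2*d+1 : ℕ):ℝ) + 1 - 1 = ((2*d+1 : ℕ):ℝ) by ring]
        exact Real.rpow_natCast _ _
      have hrpow3 : y ^ ((2:ℝ) - 1) = y := by norm_num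
      have hΓ2 : Real.Gamma 2 = 1 := Real.Gamma_two
      rw [hrpow1, hrpow2, hrpow3, hΓα, hΓ2, hC]
      have hyne : y ≠ 0 := hy.ne'
      have hfact : (Nat.factorial (2*d+1) : ℝ) ≠ 0 := by positivity
      rw [inv_pow]
      field_simp
      ring
  calc ∫⁻ ω, ENNReal.ofReal (X ω) ^ (2*d) ∂μ
      = ∫⁻ ω, g (1 / X ω) ∂μ := by
        apply lintegral_congr; intro ω; rw [hg]; simp only [one_div, inv_inv]
    _ = ∫⁻ y, g y ∂(Measure.map (fun ω => 1 / X ω) μ) :=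
        (lintegral_map' hgm.aemeasurable hinv).symm
    _ = ∫⁻ y, g y ∂(chiSq (4*(d+1))) := by rw [hlaw]
    _ = ∫⁻ y, (gammaPDF α (1/2) * g) y ∂(volume) := by
        rw [chiSq, gammaMeasure]
        exact lintegral_withDensity_eq_lintegral_mul volume
          ((measurable_gammaPDFReal _ _).ennreal_ofReal) hgm
    _ = ∫⁻ y, ENNReal.ofReal C * gammaPDF 2 (1/2) y ∂(volume) := by
        apply lintegral_congr; intro y; exact hptwise y
    _ = ENNReal.ofReal C * ∫⁻ y, gammaPDF 2 (1/2) y ∂(volume) :=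
        lintegral_const_mul _ ((measurable_gammaPDFReal _ _).ennreal_ofReal)
    _ = ENNReal.ofReal C := by
        rw [lintegral_gammaPDF_eq_one (by norm_num) (by norm_num), mul_one]

theorem stmt9 {Ωs : Type*} [MeasurableSpace Ωs] (μ : Measure Ωs)
    [IsProbabilityMeasure μ] {m n : ℕ} (hmn : m ≤ n) (hgap : 1 ≤ n - m)
    (X : Fin m → Ωs → ℝ) (hnn : ∀ i ω, 0 ≤ X i ω)
    (hlaw : ∀ i, Measure.map (fun ω => 1 / X i ω) μ = chiSq (4 * (n - m + 1))) :
    ∀ t : ℝ, 1 ≤ t →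
      (μ {ω | 3 * (m : ℝ) / (4 * ((n : ℝ) - (m : ℝ) + 1)) * t < ∑ i, X i ω}).toReal
        ≤ t ^ (-(2 * ((n : ℝ) - (m : ℝ)))) := by
  intro t ht
  have ht0 : (0:ℝ) < t := lt_of_lt_of_le one_pos ht
  set d : ℕ := n - m with hddef
  have hcast : (n:ℝ) - (m:ℝ) = (d:ℝ) := by rw [hddef]; exact (Nat.cast_sub hmn).symm
  rw [hcast]
  rcases Nat.eq_zero_or_pos m with hm0 | hm
  · subst hm0
    have hset : {ω : Ωs | 3 * ((0:ℕ) : ℝ) / (4 * ((d:ℝ) + 1)) * t < ∑ i : Fin 0, X i ω} = ∅ := by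
      ext ω; simp
    rw [hset]
    simp only [measure_empty, ENNReal.toReal_zero]
    exact Real.rpow_nonneg ht0.le _
  · -- main case
    set q : ℕ := 2*d with hqdef
    have hq1 : 1 ≤ q := by omega
    have hqne : q ≠ 0 := by omega
    have hq0 : (q:ℝ≥0∞) ≠ 0 := by exact_mod_cast hqne
    have hqtop : (q:ℝ≥0∞) ≠ ⊤ := ENNReal.natCast_ne_top q
    have hqtoReal : ((q:ℝ≥0∞) : ℝ≥0∞).toReal = (q:ℝ) := by simp
    have hqRne : (q:ℝ) ≠ 0 := Nat.cast_ne_zero.mpr hqne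
    set C : ℝ := (1/2)^q / (Nat.factorial (q+1)) with hC
    have hCpos : 0 < C := by rw [hC]; positivity
    have hXm : ∀ i, AEMeasurable (X i) μ := fun i =>
      aemeas_of_law μ (X i) _ (by omega) (hlaw i)
    have hInt : ∀ i, ∫⁻ ω, ((‖X i ω‖₊ : ℝ≥0∞)) ^ ((q:ℝ≥0∞)).toReal ∂μ = ENNReal.ofReal C := by
      intro i
      have hm' := moment_eq μ (X i) d hgap (hlaw i)
      rw [← hqdef] at hm'
      rw [hqtoReal]
      calc ∫⁻ ω, ((‖X i ω‖₊ : ℝ≥0∞)) ^ ((q:ℕ):ℝ) ∂μ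
          = ∫⁻ ω, ENNReal.ofReal (X i ω) ^ q ∂μ := by
            apply lintegral_congr; intro ω
            rw [← enorm_eq_nnnorm, Real.enorm_eq_ofReal (hnn i ω), ENNReal.rpow_natCast]
        _ = ENNReal.ofReal C := hm'
    have hNorm : ∀ i, eLpNorm (X i) q μ = (ENNReal.ofReal C) ^ (1/(q:ℝ)) := by
      intro i
      rw [eLpNorm_eq_lintegral_rpow_enorm_toReal hq0 hqtop]; simp only [enorm_eq_nnnorm]; rw [hInt i, hqtoReal]
    have hsum_eq : (fun ω => ∑ i, X i ω) = ∑ i : Fin m, X i := by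
      funext ω; simp [Finset.sum_apply]
    have hTri : eLpNorm (fun ω => ∑ i, X i ω) q μ
        ≤ (m : ℝ≥0∞) * (ENNReal.ofReal C) ^ (1/(q:ℝ)) := by
      rw [hsum_eq]
      calc eLpNorm (∑ i : Fin m, X i) q μ ≤ ∑ i : Fin m, eLpNorm (X i) q μ :=
          eLpNorm_sum_le (fun i _ => (hXm i).aestronglyMeasurable) (by exact_mod_cast hq1)
        _ = (m:ℝ≥0∞) * (ENNReal.ofReal C) ^ (1/(q:ℝ)) := by
          simp only [hNorm, Finset.sum_const, Finset.card_univ, Fintype.card_fin,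
            nsmul_eq_mul]
    have hrpow_cancel : ∀ x : ℝ≥0∞, (x ^ (1/(q:ℝ))) ^ q = x := by
      intro x
      rw [← ENNReal.rpow_natCast (x ^ (1/(q:ℝ))) q, ← ENNReal.rpow_mul, one_div,
        inv_mul_cancel₀ hqRne, ENNReal.rpow_one]
    have hIZ : ∫⁻ ω, (ENNReal.ofReal (∑ i, X i ω)) ^ q ∂μ
        ≤ (m:ℝ≥0∞)^q * ENNReal.ofReal C := by
      have heq : ∫⁻ ω, (ENNReal.ofReal (∑ i, X i ω)) ^ q ∂μ
          = eLpNorm (fun ω => ∑ i, X i ω) q μ ^ q := by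
        rw [eLpNorm_eq_lintegral_rpow_enorm_toReal hq0 hqtop, hqtoReal, hrpow_cancel]
        apply lintegral_congr; intro ω
        rw [Real.enorm_eq_ofReal (Finset.sum_nonneg fun i _ => hnn i ω),
          ENNReal.rpow_natCast]
      rw [heq]
      calc eLpNorm (fun ω => ∑ i, X i ω) q μ ^ q
          ≤ ((m:ℝ≥0∞) * (ENNReal.ofReal C) ^ (1/(q:ℝ)))^q := pow_le_pow_left' hTri q
        _ = (m:ℝ≥0∞)^q * ENNReal.ofReal C := by rw [mul_pow, hrpow_cancel]
    set c : ℝ := 3*(m:ℝ)/(4*((d:ℝ)+1)) with hcdef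
    have hm' : (0:ℝ) < m := by exact_mod_cast hm
    have hc : 0 < c := by
      rw [hcdef]; apply div_pos (by linarith) (by positivity)
    have hct : 0 < c * t := mul_pos hc ht0
    set ε : ℝ≥0∞ := ENNReal.ofReal ((c*t)^q) with hεdef
    have hε0 : ε ≠ 0 := by
      rw [hεdef, ne_eq, ENNReal.ofReal_eq_zero, not_le]; positivity
    have hεtop : ε ≠ ⊤ := ENNReal.ofReal_ne_top
    have hFmeas : AEMeasurable (fun ω => (ENNReal.ofReal (∑ i, X i ω))^q) μ := by
      exact ((ENNReal.measurable_ofReal.comp_aemeasurable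
        (Finset.aemeasurable_fun_sum Finset.univ (fun i _ => hXm i))).pow_const q)
    have hmono : μ {ω | c * t < ∑ i, X i ω}
        ≤ μ {ω | ε ≤ (ENNReal.ofReal (∑ i, X i ω))^q} := by
      apply measure_mono
      intro ω hω
      simp only [Set.mem_setOf_eq] at hω ⊢
      calc ε = ENNReal.ofReal ((c*t)^q) := hεdef
        _ ≤ ENNReal.ofReal ((∑ i, X i ω)^q) :=
            ENNReal.ofReal_le_ofReal (pow_le_pow_left₀ hct.le hω.le q)
        _ = (ENNReal.ofReal (∑ i, X i ω))^q :=
            ENNReal.ofReal_pow (Finset.sum_nonneg fun i _ => hnn i ω) q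
    have hmarkov := mul_meas_ge_le_lintegral₀ hFmeas ε
    have hfinal : μ {ω | c * t < ∑ i, X i ω} ≤ ((m:ℝ≥0∞)^q * ENNReal.ofReal C) / ε := by
      rw [ENNReal.le_div_iff_mul_le (Or.inl hε0) (Or.inl hεtop)]
      calc μ {ω | c * t < ∑ i, X i ω} * ε = ε * μ {ω | c * t < ∑ i, X i ω} := mul_comm _ _
        _ ≤ ε * μ {ω | ε ≤ (ENNReal.ofReal (∑ i, X i ω))^q} := mul_le_mul_right hmono _
        _ ≤ ∫⁻ ω, (ENNReal.ofReal (∑ i, X i ω))^q ∂μ := hmarkov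
        _ ≤ (m:ℝ≥0∞)^q * ENNReal.ofReal C := hIZ
    have hRHS : ENNReal.ofReal ((m:ℝ)^q * C / (c*t)^q)
        = ((m:ℝ≥0∞)^q * ENNReal.ofReal C) / ε := by
      rw [hεdef]
      conv_lhs => rw [ENNReal.ofReal_div_of_pos (by positivity),
        ENNReal.ofReal_mul (by positivity), ENNReal.ofReal_pow m.cast_nonneg,
        ENNReal.ofReal_natCast]
    -- real inequality
    have hqr : -(2 * (d:ℝ)) = -((q:ℕ):ℝ) := by rw [hqdef]; push_cast; ring
    have hA := arithA q hq1
    have hqcast : ((q:ℕ):ℝ) = 2*(d:ℝ) := by rw [hqdef]; push_cast; ring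
    have hkey : (m:ℝ)^q * C ≤ c^q := by
      have hcq : c^q = (3^q * (m:ℝ)^q) / (2^q * (((q:ℕ):ℝ)+2)^q) := by
        rw [hcdef, div_pow, mul_pow]
        congr 1
        rw [show (4*((d:ℝ)+1)) = 2*(((q:ℕ):ℝ)+2) by rw [hqcast]; ring, mul_pow]
      rw [hC, hcq, mul_div_assoc']
      rw [div_le_div_iff₀ (by positivity) (by positivity)]
      have h12 : ((1/2:ℝ))^q * 2^q = 1 := by rw [← mul_pow]; norm_num
      have e1 : (m:ℝ)^q * (1/2)^q * (2^q * (((q:ℕ):ℝ)+2)^q)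
          = ((1/2:ℝ)^q * 2^q) * ((m:ℝ)^q * (((q:ℕ):ℝ)+2)^q) := by ring
      calc (m:ℝ)^q * (1/2)^q * (2^q * (((q:ℕ):ℝ)+2)^q)
          = ((1/2:ℝ)^q * 2^q) * ((m:ℝ)^q * (((q:ℕ):ℝ)+2)^q) := e1
        _ = (m:ℝ)^q * (((q:ℕ):ℝ)+2)^q := by rw [h12, one_mul]
        _ ≤ (m:ℝ)^q * (3^q * (Nat.factorial (q+1))) :=
            mul_le_mul_of_nonneg_left hA (by positivity)
        _ = 3^q * (m:ℝ)^q * (Nat.factorial (q+1)) := by ring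
    have hreal : (m:ℝ)^q * C / (c*t)^q ≤ t ^ (-(2 * (d:ℝ))) := by
      rw [hqr, Real.rpow_neg ht0.le, Real.rpow_natCast]
      rw [mul_pow, div_le_iff₀ (by positivity)]
      rw [show (t^q)⁻¹ * (c^q * t^q) = c^q by field_simp]
      exact hkey
    apply ENNReal.toReal_le_of_le_ofReal (Real.rpow_nonneg ht0.le _)
    refine le_trans hfinal ?_
    rw [← hRHS]
    exact ENNReal.ofReal_le_ofReal hreal


end
end

section
/- (Deterministic error bound.) Let A ∈ ℍ^{m×n} have QSVD A = U·diag(Σ₁,Σ₂)·[V₁ V₂]* with Σ₁ ∈ ℝ^{k×k}, and let Ω ∈ ℍ^{n×ℓ} with ℓ ≥ k. Set Ω₁ = V₁*Ω ∈ ℍ^{k×ℓ} and Ω₂ = V₂*Ω, and assume Ω₁ has full row rank. If Q is a quaternion matrix with orthonormal columns spanning the range of AΩ, then for a ∈ {2, F}: ‖(I − QQ*)A‖_a² ≤ ‖Σ₂‖_a² + ‖Σ₂Ω₂Ω₁†‖_a². -/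
open scoped Quaternion
open Matrix MeasureTheory ProbabilityTheory

noncomputable section

/-- Moore–Penrose pseudoinverse of a full-row-rank quaternion matrix. -/
def qpinv {m n : ℕ} (G : Matrix (Fin m) (Fin n) ℍ[ℝ]) :
    Matrix (Fin n) (Fin m) ℍ[ℝ] :=
  Gᴴ * Ring.inverse (G * Gᴴ)
namespace QDet

variable {m n k s l r : ℕ}

/-- squared euclidean norm of a quaternion vector -/
def vnSq {n : ℕ} (x : Fin n → ℍ[ℝ]) : ℝ := ∑ i, ‖x i‖ ^ 2

/-- real inner product of quaternion vectors -/
def ipR {n : ℕ} (x y : Fin n → ℍ[ℝ]) : ℝ := (star x ⬝ᵥ y).re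

lemma vnSq_nonneg (x : Fin n → ℍ[ℝ]) : 0 ≤ vnSq x :=
  Finset.sum_nonneg fun _ _ => sq_nonneg _

lemma ipR_self (x : Fin n → ℍ[ℝ]) : ipR x x = vnSq x := by
  unfold ipR vnSq dotProduct
  rw [show ((∑ i, star x i * x i).re) = ∑ i, (star x i * x i).re from
    map_sum (QuaternionAlgebra.reₗ (R := ℝ) (-1) 0 (-1)) _ _]
  refine Finset.sum_congr rfl fun i _ => ?_
  simp only [Pi.star_apply]
  rw [Quaternion.star_mul_self]
  simp [Quaternion.normSq_eq_norm_mul_self, sq]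

lemma ipR_mulVec (M : Matrix (Fin m) (Fin n) ℍ[ℝ]) (N : Matrix (Fin m) (Fin k) ℍ[ℝ])
    (x : Fin n → ℍ[ℝ]) (y : Fin k → ℍ[ℝ]) :
    ipR (M *ᵥ x) (N *ᵥ y) = ipR x ((Mᴴ * N) *ᵥ y) := by
  unfold ipR
  rw [star_mulVec, Matrix.dotProduct_mulVec, Matrix.vecMul_vecMul, ← Matrix.dotProduct_mulVec]

lemma vnSq_mulVec (M : Matrix (Fin m) (Fin n) ℍ[ℝ]) (x : Fin n → ℍ[ℝ]) :
    vnSq (M *ᵥ x) = ipR x ((Mᴴ * M) *ᵥ x) := by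
  rw [← ipR_mulVec, ipR_self]

lemma ipR_add_left (x y : Fin n → ℍ[ℝ]) (z : Fin n → ℍ[ℝ]) :
    ipR (x + y) z = ipR x z + ipR y z := by
  unfold ipR
  rw [star_add, add_dotProduct, Quaternion.re_add]

lemma ipR_add_right (x : Fin n → ℍ[ℝ]) (y z : Fin n → ℍ[ℝ]) :
    ipR x (y + z) = ipR x y + ipR x z := by
  unfold ipR
  rw [dotProduct_add, Quaternion.re_add]

lemma vnSq_isometry {M : Matrix (Fin m) (Fin n) ℍ[ℝ]} (h : Mᴴ * M = 1)
    (x : Fin n → ℍ[ℝ]) : vnSq (M *ᵥ x) = vnSq x := by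
  rw [vnSq_mulVec, h, Matrix.one_mulVec, ipR_self]

lemma vnSq_proj_le {Q : Matrix (Fin m) (Fin r) ℍ[ℝ]} (hQ : Qᴴ * Q = 1)
    (x : Fin m → ℍ[ℝ]) : vnSq ((1 - Q * Qᴴ) *ᵥ x) ≤ vnSq x := by
  have hP : ((1 - Q * Qᴴ)ᴴ * (1 - Q * Qᴴ) : Matrix (Fin m) (Fin m) ℍ[ℝ]) = 1 - Q * Qᴴ := by
    simp only [conjTranspose_sub, conjTranspose_one, conjTranspose_mul,
      conjTranspose_conjTranspose]
    rw [Matrix.sub_mul, Matrix.mul_sub, Matrix.mul_sub]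
    rw [Matrix.one_mul, Matrix.mul_one]
    rw [Matrix.mul_assoc Q Qᴴ (Q * Qᴴ), ← Matrix.mul_assoc Qᴴ Q Qᴴ, hQ, Matrix.one_mul,
      Matrix.one_mul]
    abel
  have hR : ((Q * Qᴴ)ᴴ * (Q * Qᴴ) : Matrix (Fin m) (Fin m) ℍ[ℝ]) = Q * Qᴴ := by
    simp only [conjTranspose_mul, conjTranspose_conjTranspose]
    rw [Matrix.mul_assoc Q Qᴴ (Q * Qᴴ), ← Matrix.mul_assoc Qᴴ Q Qᴴ, hQ, Matrix.one_mul]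
  have h1 : vnSq ((1 - Q * Qᴴ) *ᵥ x) + vnSq ((Q * Qᴴ) *ᵥ x) = vnSq x := by
    rw [vnSq_mulVec, vnSq_mulVec, hP, hR, ← ipR_add_right]
    have : ((1 - Q * Qᴴ) *ᵥ x) + ((Q * Qᴴ) *ᵥ x) = x := by
      rw [← Matrix.add_mulVec, sub_add_cancel, Matrix.one_mulVec]
    rw [← Matrix.add_mulVec, sub_add_cancel, Matrix.one_mulVec, ipR_self]
  nlinarith [vnSq_nonneg ((Q * Qᴴ) *ᵥ x)]


lemma ipR_zero (x : Fin n → ℍ[ℝ]) : ipR x 0 = 0 := by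
  unfold ipR; rw [dotProduct_zero]; rfl

lemma vnSq_neg (x : Fin n → ℍ[ℝ]) : vnSq (-x) = vnSq x := by
  unfold vnSq; simp

lemma vnSq_eq_zero {x : Fin n → ℍ[ℝ]} (h : vnSq x = 0) : x = 0 := by
  funext i
  have := (Finset.sum_eq_zero_iff_of_nonneg (fun i _ => sq_nonneg ‖x i‖)).1 h i (Finset.mem_univ i)
  have : ‖x i‖ = 0 := by nlinarith
  simpa using this

/-- orthogonal decomposition through two blocks with orthonormal columns -/
lemma vnSq_two_blocks {V₁ : Matrix (Fin n) (Fin k) ℍ[ℝ]} {V₂ : Matrix (Fin n) (Fin s) ℍ[ℝ]}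
    (hV11 : V₁ᴴ * V₁ = 1) (hV22 : V₂ᴴ * V₂ = 1) (hV12 : V₁ᴴ * V₂ = 0)
    (u : Fin k → ℍ[ℝ]) (v : Fin s → ℍ[ℝ]) :
    vnSq (V₁ *ᵥ u + V₂ *ᵥ v) = vnSq u + vnSq v := by
  have hV21 : V₂ᴴ * V₁ = 0 := by
    have := congrArg conjTranspose hV12
    simpa using this
  rw [← ipR_self, ipR_add_left, ipR_add_right, ipR_add_right,
    ipR_mulVec, ipR_mulVec, ipR_mulVec, ipR_mulVec, hV11, hV22, hV12, hV21,
    Matrix.one_mulVec, Matrix.one_mulVec, Matrix.zero_mulVec, Matrix.zero_mulVec,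
    ipR_zero, ipR_zero, ipR_self, ipR_self]
  ring

/-- splitting of the squared norm through a full unitary pair -/
lemma vnSq_split {V₁ : Matrix (Fin n) (Fin k) ℍ[ℝ]} {V₂ : Matrix (Fin n) (Fin s) ℍ[ℝ]}
    (hVfull : V₁ * V₁ᴴ + V₂ * V₂ᴴ = 1) (x : Fin n → ℍ[ℝ]) :
    vnSq (V₁ᴴ *ᵥ x) + vnSq (V₂ᴴ *ᵥ x) = vnSq x := by
  rw [vnSq_mulVec, vnSq_mulVec, conjTranspose_conjTranspose, conjTranspose_conjTranspose,
    ← ipR_add_right, ← Matrix.add_mulVec, hVfull, Matrix.one_mulVec, ipR_self]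

lemma vnSq_smul (c : ℝ) (x : Fin n → ℍ[ℝ]) : vnSq (c • x) = c ^ 2 * vnSq x := by
  unfold vnSq
  rw [Finset.mul_sum]
  refine Finset.sum_congr rfl fun i _ => ?_
  rw [Pi.smul_apply, norm_smul, mul_pow]
  simp [Real.norm_eq_abs, sq_abs]

lemma mulVec_smul' (M : Matrix (Fin m) (Fin n) ℍ[ℝ]) (c : ℝ) (x : Fin n → ℍ[ℝ]) :
    M *ᵥ (c • x) = c • (M *ᵥ x) := by
  funext i
  simp only [Matrix.mulVec, dotProduct, Pi.smul_apply, Finset.smul_sum]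
  refine Finset.sum_congr rfl fun j _ => ?_
  rw [mul_smul_comm]

/-- frobSqQ is nonneg -/
lemma frobSqQ_nonneg (M : Matrix (Fin m) (Fin n) ℍ[ℝ]) : 0 ≤ frobSqQ M :=
  Finset.sum_nonneg fun _ _ => Finset.sum_nonneg fun _ _ => sq_nonneg _

lemma frobQ_sq (M : Matrix (Fin m) (Fin n) ℍ[ℝ]) : frobQ M ^ 2 = frobSqQ M :=
  Real.sq_sqrt (frobSqQ_nonneg M)

/-- bound of the image squared norm by frobenius times the vector norm -/
lemma vnSq_mulVec_le (M : Matrix (Fin m) (Fin n) ℍ[ℝ]) (x : Fin n → ℍ[ℝ]) :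
    vnSq (M *ᵥ x) ≤ frobSqQ M * vnSq x := by
  unfold vnSq frobSqQ
  rw [Finset.sum_mul]
  refine Finset.sum_le_sum fun i _ => ?_
  have h1 : ‖(M *ᵥ x) i‖ ≤ ∑ j, ‖M i j‖ * ‖x j‖ := by
    have : (M *ᵥ x) i = ∑ j, M i j * x j := rfl
    rw [this]
    refine (norm_sum_le _ _).trans ?_
    exact Finset.sum_le_sum fun j _ => le_of_eq (norm_mul _ _)
  have h2 : (∑ j, ‖M i j‖ * ‖x j‖) ^ 2 ≤ (∑ j, ‖M i j‖ ^ 2) * ∑ j, ‖x j‖ ^ 2 :=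
    Finset.sum_mul_sq_le_sq_mul_sq _ _ _
  calc ‖(M *ᵥ x) i‖ ^ 2 ≤ (∑ j, ‖M i j‖ * ‖x j‖) ^ 2 := by
        have := norm_nonneg ((M *ᵥ x) i)
        have hnn : (0:ℝ) ≤ ∑ j, ‖M i j‖ * ‖x j‖ :=
          Finset.sum_nonneg fun j _ => mul_nonneg (norm_nonneg _) (norm_nonneg _)
        nlinarith
    _ ≤ _ := h2


/-- the defining set of `specQ` -/
lemma specQ_def (M : Matrix (Fin m) (Fin n) ℍ[ℝ]) :
    specQ M = sSup {r : ℝ | ∃ x : Fin n → ℍ[ℝ], vnSq x = 1 ∧ r = Real.sqrt (vnSq (M *ᵥ x))} :=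
  rfl

lemma specQ_set_bdd (M : Matrix (Fin m) (Fin n) ℍ[ℝ]) :
    ∀ r' ∈ {r : ℝ | ∃ x : Fin n → ℍ[ℝ], vnSq x = 1 ∧ r = Real.sqrt (vnSq (M *ᵥ x))},
      r' ≤ frobQ M := by
  rintro r' ⟨x, hx, rfl⟩
  have h := vnSq_mulVec_le M x
  rw [hx, mul_one] at h
  exact (Real.sqrt_le_sqrt h)

lemma specQ_bddAbove (M : Matrix (Fin m) (Fin n) ℍ[ℝ]) :
    BddAbove {r : ℝ | ∃ x : Fin n → ℍ[ℝ], vnSq x = 1 ∧ r = Real.sqrt (vnSq (M *ᵥ x))} :=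
  ⟨frobQ M, specQ_set_bdd M⟩

lemma specQ_nonneg (M : Matrix (Fin m) (Fin n) ℍ[ℝ]) : 0 ≤ specQ M := by
  rw [specQ_def]
  exact Real.sSup_nonneg fun r hr => by
    obtain ⟨x, hx, rfl⟩ := hr; exact Real.sqrt_nonneg _

lemma le_specQ (M : Matrix (Fin m) (Fin n) ℍ[ℝ]) {x : Fin n → ℍ[ℝ]} (hx : vnSq x = 1) :
    Real.sqrt (vnSq (M *ᵥ x)) ≤ specQ M := by
  rw [specQ_def]
  exact le_csSup (specQ_bddAbove M) ⟨x, hx, rfl⟩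

lemma specQ_le (M : Matrix (Fin m) (Fin n) ℍ[ℝ]) {c : ℝ} (hc : 0 ≤ c)
    (h : ∀ x : Fin n → ℍ[ℝ], vnSq x = 1 → Real.sqrt (vnSq (M *ᵥ x)) ≤ c) :
    specQ M ≤ c := by
  rw [specQ_def]
  exact Real.sSup_le (fun r hr => by obtain ⟨x, hx, rfl⟩ := hr; exact h x hx) hc

lemma sqrt_vnSq_eq (x : Fin n → ℍ[ℝ]) :
    Real.sqrt (vnSq x) = ‖(WithLp.equiv 2 (Fin n → ℍ[ℝ])).symm x‖ := by
  rw [PiLp.norm_eq_of_L2]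
  rfl

lemma sqrt_vnSq_add_le (x y : Fin n → ℍ[ℝ]) :
    Real.sqrt (vnSq (x + y)) ≤ Real.sqrt (vnSq x) + Real.sqrt (vnSq y) := by
  rw [sqrt_vnSq_eq, sqrt_vnSq_eq, sqrt_vnSq_eq]
  exact norm_add_le ((WithLp.equiv 2 (Fin n → ℍ[ℝ])).symm x)
    ((WithLp.equiv 2 (Fin n → ℍ[ℝ])).symm y)

lemma sqrt_vnSq_mulVec_le (M : Matrix (Fin m) (Fin n) ℍ[ℝ]) (x : Fin n → ℍ[ℝ]) :
    Real.sqrt (vnSq (M *ᵥ x)) ≤ specQ M * Real.sqrt (vnSq x) := by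
  by_cases h0 : vnSq x = 0
  · have hx0 : x = 0 := vnSq_eq_zero h0
    subst hx0
    rw [Matrix.mulVec_zero, h0]
    have : vnSq (0 : Fin m → ℍ[ℝ]) = 0 := by unfold vnSq; simp
    rw [this]
    simp
  · have hpos : 0 < vnSq x := lt_of_le_of_ne (vnSq_nonneg x) (Ne.symm h0)
    set c := Real.sqrt (vnSq x) with hc
    have hcpos : 0 < c := Real.sqrt_pos.mpr hpos
    have hx' : vnSq (c⁻¹ • x) = 1 := by
      rw [vnSq_smul]
      rw [show (c⁻¹ : ℝ) ^ 2 = (vnSq x)⁻¹ by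
        rw [inv_pow, hc, Real.sq_sqrt (le_of_lt hpos)]]
      field_simp
    have hle := le_specQ M hx'
    have he : Real.sqrt (vnSq (M *ᵥ (c⁻¹ • x))) = c⁻¹ * Real.sqrt (vnSq (M *ᵥ x)) := by
      rw [mulVec_smul', vnSq_smul, Real.sqrt_mul (sq_nonneg _),
        Real.sqrt_sq (inv_nonneg.mpr (le_of_lt hcpos))]
    rw [he] at hle
    calc Real.sqrt (vnSq (M *ᵥ x)) = c * (c⁻¹ * Real.sqrt (vnSq (M *ᵥ x))) := by
          field_simp
      _ ≤ c * specQ M := by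
          exact mul_le_mul_of_nonneg_left hle (le_of_lt hcpos)
      _ = specQ M * c := mul_comm _ _


/-- columns of a matrix product -/
lemma col_mul (M : Matrix (Fin m) (Fin n) ℍ[ℝ]) (N : Matrix (Fin n) (Fin k) ℍ[ℝ]) (j : Fin k) :
    (fun i => (M * N) i j) = M *ᵥ (fun i => N i j) := rfl

/-- Frobenius via columns -/
lemma frobSqQ_cols (N : Matrix (Fin m) (Fin n) ℍ[ℝ]) :
    frobSqQ N = ∑ j, vnSq (fun i => N i j) := by
  unfold frobSqQ vnSq
  exact Finset.sum_comm

lemma frobSqQ_conjT (M : Matrix (Fin m) (Fin n) ℍ[ℝ]) : frobSqQ Mᴴ = frobSqQ M := by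
  unfold frobSqQ
  rw [Finset.sum_comm]
  refine Finset.sum_congr rfl fun i _ => Finset.sum_congr rfl fun j _ => ?_
  rw [Matrix.conjTranspose_apply, norm_star]

/-- Key algebraic identity -/
lemma key_identity
    (A : Matrix (Fin m) (Fin n) ℍ[ℝ])
    (U₁ : Matrix (Fin m) (Fin k) ℍ[ℝ]) (U₂ : Matrix (Fin m) (Fin s) ℍ[ℝ])
    (V₁ : Matrix (Fin n) (Fin k) ℍ[ℝ]) (V₂ : Matrix (Fin n) (Fin s) ℍ[ℝ])
    (D₁ : Matrix (Fin k) (Fin k) ℍ[ℝ]) (D₂ : Matrix (Fin s) (Fin s) ℍ[ℝ])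
    (Ω : Matrix (Fin n) (Fin l) ℍ[ℝ])
    (Q : Matrix (Fin m) (Fin r) ℍ[ℝ]) (hQ : Qᴴ * Q = 1)
    (hA : A = U₁ * D₁ * V₁ᴴ + U₂ * D₂ * V₂ᴴ)
    (hrank : IsUnit ((V₁ᴴ * Ω) * (V₁ᴴ * Ω)ᴴ))
    (hrange₁ : ∃ R, A * Ω = Q * R) :
    (1 - Q * Qᴴ) * A
      = (1 - Q * Qᴴ) * (U₂ * (D₂ * V₂ᴴ - (D₂ * (V₂ᴴ * Ω) * qpinv (V₁ᴴ * Ω)) * V₁ᴴ)) := by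
  set P := qpinv (V₁ᴴ * Ω) with hP
  have hpinv : (V₁ᴴ * Ω) * P = 1 := by
    rw [hP]
    unfold qpinv
    rw [← Matrix.mul_assoc]
    exact Ring.mul_inverse_cancel _ hrank
  have hpinv' : V₁ᴴ * (Ω * P) = 1 := by rw [← Matrix.mul_assoc]; exact hpinv
  have hPiQ : (1 - Q * Qᴴ) * Q = 0 := by
    rw [Matrix.sub_mul, Matrix.one_mul, Matrix.mul_assoc, hQ, Matrix.mul_one, sub_self]
  obtain ⟨R0, hR⟩ := hrange₁
  have hPiAΩP : (1 - Q * Qᴴ) * (A * (Ω * P)) = 0 := by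
    have h1 : A * (Ω * P) = Q * (@HMul.hMul (Matrix (Fin r) (Fin l) ℍ[ℝ]) _ _ _ R0 P) := by
      rw [← Matrix.mul_assoc, hR]; exact Matrix.mul_assoc Q R0 P
    rw [h1, ← Matrix.mul_assoc, hPiQ, Matrix.zero_mul]
  have expand : (1 - Q * Qᴴ) * A
      - (1 - Q * Qᴴ) * (U₂ * (D₂ * V₂ᴴ - (D₂ * (V₂ᴴ * Ω) * P) * V₁ᴴ))
      = ((1 - Q * Qᴴ) * (A * (Ω * P))) * V₁ᴴ := by
    simp only [hA, Matrix.mul_sub, Matrix.sub_mul, Matrix.mul_add, Matrix.add_mul,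
      Matrix.mul_assoc, hpinv', Matrix.mul_one, Matrix.one_mul]
    abel
  rw [hPiAΩP, Matrix.zero_mul] at expand
  exact sub_eq_zero.mp expand


/-- spectral half -/
lemma spec_half
    (U₂ : Matrix (Fin m) (Fin s) ℍ[ℝ]) (hU22 : U₂ᴴ * U₂ = 1)
    (V₁ : Matrix (Fin n) (Fin k) ℍ[ℝ]) (V₂ : Matrix (Fin n) (Fin s) ℍ[ℝ])
    (hVfull : V₁ * V₁ᴴ + V₂ * V₂ᴴ = 1)
    (D₂ : Matrix (Fin s) (Fin s) ℍ[ℝ]) (T : Matrix (Fin s) (Fin k) ℍ[ℝ])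
    (Q : Matrix (Fin m) (Fin r) ℍ[ℝ]) (hQ : Qᴴ * Q = 1) :
    specQ ((1 - Q * Qᴴ) * (U₂ * (D₂ * V₂ᴴ - T * V₁ᴴ))) ^ 2
      ≤ specQ D₂ ^ 2 + specQ T ^ 2 := by
  set W0 := D₂ * V₂ᴴ - T * V₁ᴴ with hW0
  have hrhs0 : (0:ℝ) ≤ specQ D₂ ^ 2 + specQ T ^ 2 := by positivity
  have hspec : specQ ((1 - Q * Qᴴ) * (U₂ * W0)) ≤ Real.sqrt (specQ D₂ ^ 2 + specQ T ^ 2) := by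
    refine specQ_le _ (Real.sqrt_nonneg _) fun x hx => ?_
    have h1 : vnSq (((1 - Q * Qᴴ) * (U₂ * W0)) *ᵥ x) ≤ vnSq ((U₂ * W0) *ᵥ x) := by
      rw [← Matrix.mulVec_mulVec]
      exact vnSq_proj_le hQ _
    have h2 : vnSq ((U₂ * W0) *ᵥ x) = vnSq (W0 *ᵥ x) := by
      rw [← Matrix.mulVec_mulVec]
      exact vnSq_isometry hU22 _
    have h3 : W0 *ᵥ x = D₂ *ᵥ (V₂ᴴ *ᵥ x) + (-(T *ᵥ (V₁ᴴ *ᵥ x))) := by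
      rw [hW0, Matrix.sub_mulVec, Matrix.mulVec_mulVec, Matrix.mulVec_mulVec]
      abel
    set u := V₁ᴴ *ᵥ x with hu
    set v := V₂ᴴ *ᵥ x with hv
    have hsum : vnSq u + vnSq v = 1 := by
      rw [hu, hv, vnSq_split hVfull x, hx]
    have h4 : Real.sqrt (vnSq (W0 *ᵥ x))
        ≤ specQ D₂ * Real.sqrt (vnSq v) + specQ T * Real.sqrt (vnSq u) := by
      rw [h3]
      refine (sqrt_vnSq_add_le _ _).trans ?_
      have hna : vnSq (-(T *ᵥ u)) = vnSq (T *ᵥ u) := vnSq_neg _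
      rw [hna]
      exact add_le_add (sqrt_vnSq_mulVec_le D₂ v) (sqrt_vnSq_mulVec_le T u)
    have h5 : specQ D₂ * Real.sqrt (vnSq v) + specQ T * Real.sqrt (vnSq u)
        ≤ Real.sqrt (specQ D₂ ^ 2 + specQ T ^ 2) := by
      set a := Real.sqrt (vnSq v) with ha
      set b := Real.sqrt (vnSq u) with hb
      have ha2 : a ^ 2 = vnSq v := Real.sq_sqrt (vnSq_nonneg v)
      have hb2 : b ^ 2 = vnSq u := Real.sq_sqrt (vnSq_nonneg u)
      have h0a : 0 ≤ a := Real.sqrt_nonneg _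
      have h0b : 0 ≤ b := Real.sqrt_nonneg _
      have hD0 : 0 ≤ specQ D₂ := specQ_nonneg _
      have hT0 : 0 ≤ specQ T := specQ_nonneg _
      rw [show specQ D₂ * a + specQ T * b ≤ Real.sqrt (specQ D₂ ^ 2 + specQ T ^ 2)
          ↔ _ from Real.le_sqrt (by positivity) hrhs0]
      nlinarith [sq_nonneg (specQ D₂ * b - specQ T * a)]
    calc Real.sqrt (vnSq (((1 - Q * Qᴴ) * (U₂ * W0)) *ᵥ x))
        ≤ Real.sqrt (vnSq (W0 *ᵥ x)) := Real.sqrt_le_sqrt (h2 ▸ h1)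
      _ ≤ _ := h4.trans h5
  calc specQ ((1 - Q * Qᴴ) * (U₂ * W0)) ^ 2
      ≤ Real.sqrt (specQ D₂ ^ 2 + specQ T ^ 2) ^ 2 :=
        pow_le_pow_left₀ (specQ_nonneg _) hspec 2
    _ = specQ D₂ ^ 2 + specQ T ^ 2 := Real.sq_sqrt hrhs0

/-- frobenius half -/
lemma frob_half
    (U₂ : Matrix (Fin m) (Fin s) ℍ[ℝ]) (hU22 : U₂ᴴ * U₂ = 1)
    (V₁ : Matrix (Fin n) (Fin k) ℍ[ℝ]) (V₂ : Matrix (Fin n) (Fin s) ℍ[ℝ])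
    (hV11 : V₁ᴴ * V₁ = 1) (hV22 : V₂ᴴ * V₂ = 1) (hV12 : V₁ᴴ * V₂ = 0)
    (D₂ : Matrix (Fin s) (Fin s) ℍ[ℝ]) (T : Matrix (Fin s) (Fin k) ℍ[ℝ])
    (Q : Matrix (Fin m) (Fin r) ℍ[ℝ]) (hQ : Qᴴ * Q = 1) :
    frobQ ((1 - Q * Qᴴ) * (U₂ * (D₂ * V₂ᴴ - T * V₁ᴴ))) ^ 2
      ≤ frobQ D₂ ^ 2 + frobQ T ^ 2 := by
  set W0 := D₂ * V₂ᴴ - T * V₁ᴴ with hW0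
  rw [frobQ_sq, frobQ_sq, frobQ_sq]
  have h1 : frobSqQ ((1 - Q * Qᴴ) * (U₂ * W0)) ≤ frobSqQ W0 := by
    rw [frobSqQ_cols, frobSqQ_cols W0]
    refine Finset.sum_le_sum fun j _ => ?_
    rw [col_mul]
    calc vnSq ((1 - Q * Qᴴ) *ᵥ (fun i => (U₂ * W0) i j))
        ≤ vnSq (fun i => (U₂ * W0) i j) := vnSq_proj_le hQ _
      _ = vnSq (fun i => W0 i j) := by
          rw [col_mul]
          exact vnSq_isometry hU22 _
  have h2 : frobSqQ W0 = frobSqQ D₂ + frobSqQ T := by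
    rw [← frobSqQ_conjT W0, ← frobSqQ_conjT D₂, ← frobSqQ_conjT T]
    have hW0T : W0ᴴ = V₂ * D₂ᴴ - V₁ * Tᴴ := by
      rw [hW0, conjTranspose_sub, conjTranspose_mul, conjTranspose_mul,
        conjTranspose_conjTranspose, conjTranspose_conjTranspose]
    rw [hW0T, frobSqQ_cols, frobSqQ_cols D₂ᴴ, frobSqQ_cols Tᴴ, ← Finset.sum_add_distrib]
    refine Finset.sum_congr rfl fun j _ => ?_
    have hcol : (fun i => (V₂ * D₂ᴴ - V₁ * Tᴴ) i j)
        = V₁ *ᵥ (-(fun i => Tᴴ i j)) + V₂ *ᵥ (fun i => D₂ᴴ i j) := by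
      funext i
      have e1 : (V₂ * D₂ᴴ) i j = (V₂ *ᵥ (fun i => D₂ᴴ i j)) i := rfl
      have e2 : (V₁ * Tᴴ) i j = (V₁ *ᵥ (fun i => Tᴴ i j)) i := rfl
      simp only [Matrix.sub_apply, Pi.add_apply, e1, e2, Matrix.mulVec_neg, Pi.neg_apply]
      abel
    rw [hcol, vnSq_two_blocks hV11 hV22 hV12, vnSq_neg]
    ring
  exact h1.trans (le_of_eq h2)

end QDet

open QDet in
theorem stmt14 {m n k s l r : ℕ} (hl : k ≤ l)
    (A : Matrix (Fin m) (Fin n) ℍ[ℝ])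
    (U₁ : Matrix (Fin m) (Fin k) ℍ[ℝ]) (U₂ : Matrix (Fin m) (Fin s) ℍ[ℝ])
    (V₁ : Matrix (Fin n) (Fin k) ℍ[ℝ]) (V₂ : Matrix (Fin n) (Fin s) ℍ[ℝ])
    (σ1 : Fin k → ℝ) (σ2 : Fin s → ℝ)
    (hU11 : U₁ᴴ * U₁ = 1) (hU22 : U₂ᴴ * U₂ = 1) (hU12 : U₁ᴴ * U₂ = 0)
    (hV11 : V₁ᴴ * V₁ = 1) (hV22 : V₂ᴴ * V₂ = 1) (hV12 : V₁ᴴ * V₂ = 0)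
    (hVfull : V₁ * V₁ᴴ + V₂ * V₂ᴴ = 1)
    (hσ10 : ∀ i, 0 ≤ σ1 i) (hσ20 : ∀ j, 0 ≤ σ2 j)
    (hσ1a : ∀ i j : Fin k, i ≤ j → σ1 j ≤ σ1 i)
    (hσ2a : ∀ i j : Fin s, i ≤ j → σ2 j ≤ σ2 i)
    (hsplit : ∀ (i : Fin k) (j : Fin s), σ2 j ≤ σ1 i)
    (hA : A = U₁ * Matrix.diagonal (fun i => ((σ1 i : ℝ) : ℍ[ℝ])) * V₁ᴴ
            + U₂ * Matrix.diagonal (fun j => ((σ2 j : ℝ) : ℍ[ℝ])) * V₂ᴴ)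
    (Ω : Matrix (Fin n) (Fin l) ℍ[ℝ])
    (hrank : IsUnit ((V₁ᴴ * Ω) * (V₁ᴴ * Ω)ᴴ))
    (Q : Matrix (Fin m) (Fin r) ℍ[ℝ]) (hQ : Qᴴ * Q = 1)
    (hrange₁ : ∃ R, A * Ω = Q * R) (hrange₂ : ∃ W, Q = A * Ω * W) :
    specQ ((1 - Q * Qᴴ) * A) ^ 2
        ≤ specQ (Matrix.diagonal (fun j => ((σ2 j : ℝ) : ℍ[ℝ]))) ^ 2
          + specQ (Matrix.diagonal (fun j => ((σ2 j : ℝ) : ℍ[ℝ]))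
              * (V₂ᴴ * Ω) * qpinv (V₁ᴴ * Ω)) ^ 2 ∧
    frobQ ((1 - Q * Qᴴ) * A) ^ 2
        ≤ frobQ (Matrix.diagonal (fun j => ((σ2 j : ℝ) : ℍ[ℝ]))) ^ 2
          + frobQ (Matrix.diagonal (fun j => ((σ2 j : ℝ) : ℍ[ℝ]))
              * (V₂ᴴ * Ω) * qpinv (V₁ᴴ * Ω)) ^ 2 := by
  have key := key_identity A U₁ U₂ V₁ V₂
    (Matrix.diagonal (fun i => ((σ1 i : ℝ) : ℍ[ℝ])))
    (Matrix.diagonal (fun j => ((σ2 j : ℝ) : ℍ[ℝ]))) Ω Q hQ hA hrank hrange₁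
  constructor
  · rw [key]
    exact spec_half U₂ hU22 V₁ V₂ hVfull _ _ Q hQ
  · rw [key]
    exact frob_half U₂ hU22 V₁ V₂ hV11 hV22 hV12 _ _ Q hQ


end
end

section
/- (Power scheme error transfer.) Let A ∈ ℍ^{m×n}, q ≥ 0 an integer, C = (AA*)^q A, and let P be any orthogonal projector on ℍ^m (P* = P, P² = P). Then ‖(I − P)A‖₂ ≤ ‖(I − P)C‖₂^{1/(2q+1)}. -/
open scoped Quaternion
open Matrix MeasureTheory ProbabilityTheory

noncomputable section

namespace Stmt16Aux

variable {m n p : ℕ}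

/-- squared ℓ² norm of a quaternion vector -/
def nsq {n : ℕ} (x : Fin n → ℍ[ℝ]) : ℝ := ∑ i, ‖x i‖ ^ 2

/-- real bilinear form -/
def qB {n : ℕ} (x y : Fin n → ℍ[ℝ]) : ℝ := ∑ i, (x i * star (y i)).re

lemma nsq_nonneg (x : Fin n → ℍ[ℝ]) : 0 ≤ nsq x :=
  Finset.sum_nonneg fun _ _ => sq_nonneg _

lemma qB_self (x : Fin n → ℍ[ℝ]) : qB x x = nsq x := by
  unfold qB nsq
  refine Finset.sum_congr rfl fun i _ => ?_
  rw [Quaternion.self_mul_star]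
  simp [Quaternion.normSq_eq_norm_mul_self, sq]

lemma re_mul_comm (a b : ℍ[ℝ]) : (a * b).re = (b * a).re := by
  simp only [Quaternion.re_mul]; ring

lemma qB_comm (x y : Fin n → ℍ[ℝ]) : qB x y = qB y x := by
  unfold qB
  refine Finset.sum_congr rfl fun i _ => ?_
  simp only [Quaternion.re_mul, Quaternion.re_star, Quaternion.imI_star, Quaternion.imJ_star,
    Quaternion.imK_star]
  ring

lemma qB_eq_inner (x y : Fin n → ℍ[ℝ]) :
    qB x y = (inner ℝ ((WithLp.equiv 2 (Fin n → ℍ[ℝ])).symm x)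
      ((WithLp.equiv 2 (Fin n → ℍ[ℝ])).symm y) : ℝ) := by
  rw [PiLp.inner_apply]
  rfl

lemma nsq_eq_norm_sq (x : Fin n → ℍ[ℝ]) :
    nsq x = ‖(WithLp.equiv 2 (Fin n → ℍ[ℝ])).symm x‖ ^ 2 := by
  rw [PiLp.norm_sq_eq_of_L2]
  rfl

/-- Cauchy–Schwarz -/
lemma qB_sq_le (x y : Fin n → ℍ[ℝ]) : qB x y ^ 2 ≤ nsq x * nsq y := by
  rw [qB_eq_inner, nsq_eq_norm_sq, nsq_eq_norm_sq]
  have h := abs_real_inner_le_norm ((WithLp.equiv 2 (Fin n → ℍ[ℝ])).symm x)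
    ((WithLp.equiv 2 (Fin n → ℍ[ℝ])).symm y)
  calc _ = |(inner ℝ ((WithLp.equiv 2 (Fin n → ℍ[ℝ])).symm x)
        ((WithLp.equiv 2 (Fin n → ℍ[ℝ])).symm y) : ℝ)| ^ 2 := (sq_abs _).symm
    _ ≤ (‖(WithLp.equiv 2 (Fin n → ℍ[ℝ])).symm x‖ * ‖(WithLp.equiv 2 (Fin n → ℍ[ℝ])).symm y‖) ^ 2 :=
        by exact pow_le_pow_left₀ (abs_nonneg _) h 2
    _ = _ := by ring

lemma qB_le (x y : Fin n → ℍ[ℝ]) :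
    qB x y ≤ Real.sqrt (nsq x) * Real.sqrt (nsq y) := by
  have h := qB_sq_le x y
  have h2 : qB x y ≤ |qB x y| := le_abs_self _
  refine h2.trans ?_
  rw [← Real.sqrt_sq_eq_abs, ← Real.sqrt_mul (nsq_nonneg x)]
  exact Real.sqrt_le_sqrt h

lemma re_sum {ι : Type*} (s : Finset ι) (f : ι → ℍ[ℝ]) :
    (∑ i ∈ s, f i).re = ∑ i ∈ s, (f i).re := by
  induction s using Finset.cons_induction with
  | empty => simp
  | cons a s ha ih => simp [Finset.sum_cons, ih]

/-- adjoint identity -/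
lemma qB_adj (M : Matrix (Fin m) (Fin n) ℍ[ℝ]) (x : Fin m → ℍ[ℝ]) (y : Fin n → ℍ[ℝ]) :
    qB x (M.mulVec y) = qB (Mᴴ.mulVec x) y := by
  unfold qB
  simp only [Matrix.mulVec, dotProduct, Matrix.conjTranspose_apply, star_sum, StarMul.star_mul,
    Finset.mul_sum, Finset.sum_mul, re_sum]
  rw [Finset.sum_comm]
  refine Finset.sum_congr rfl fun j _ => Finset.sum_congr rfl fun i _ => ?_
  rw [re_mul_comm, mul_assoc, re_mul_comm]

lemma qB_adj' (M : Matrix (Fin m) (Fin n) ℍ[ℝ]) (x : Fin m → ℍ[ℝ]) (y : Fin n → ℍ[ℝ]) :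
    qB (M.mulVec y) x = qB y (Mᴴ.mulVec x) := by
  rw [qB_comm, qB_adj, qB_comm]

lemma nsq_smul (t : ℝ) (x : Fin n → ℍ[ℝ]) : nsq (t • x) = t ^ 2 * nsq x := by
  unfold nsq
  rw [Finset.mul_sum]
  refine Finset.sum_congr rfl fun i _ => ?_
  simp [norm_smul, mul_pow]

lemma nsq_eq_zero {x : Fin n → ℍ[ℝ]} (h : nsq x = 0) : x = 0 := by
  funext i
  have := (Finset.sum_eq_zero_iff_of_nonneg (fun i _ => sq_nonneg ‖x i‖)).1 h i (Finset.mem_univ i)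
  have : ‖x i‖ = 0 := by nlinarith [norm_nonneg (x i)]
  simpa using this


lemma nsq_mulVec_le_frob (M : Matrix (Fin m) (Fin n) ℍ[ℝ]) (x : Fin n → ℍ[ℝ]) :
    nsq (M *ᵥ x) ≤ (∑ i, ∑ j, ‖M i j‖ ^ 2) * nsq x := by
  unfold nsq
  rw [Finset.sum_mul]
  refine Finset.sum_le_sum fun i _ => ?_
  have h1 : ‖(M *ᵥ x) i‖ ≤ ∑ j, ‖M i j‖ * ‖x j‖ := by
    calc ‖(M *ᵥ x) i‖ = ‖∑ j, M i j * x j‖ := rfl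
      _ ≤ ∑ j, ‖M i j * x j‖ := norm_sum_le _ _
      _ = ∑ j, ‖M i j‖ * ‖x j‖ := by simp [norm_mul]
  calc ‖(M *ᵥ x) i‖ ^ 2 ≤ (∑ j, ‖M i j‖ * ‖x j‖) ^ 2 :=
        pow_le_pow_left₀ (norm_nonneg _) h1 2
    _ ≤ (∑ j, ‖M i j‖ ^ 2) * ∑ j, ‖x j‖ ^ 2 :=
        Finset.sum_mul_sq_le_sq_mul_sq _ _ _

lemma specQ_bddAbove (M : Matrix (Fin m) (Fin n) ℍ[ℝ]) :
    BddAbove {r : ℝ | ∃ x : Fin n → ℍ[ℝ], ∑ i, ‖x i‖ ^ 2 = 1 ∧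
      r = Real.sqrt (∑ i, ‖M.mulVec x i‖ ^ 2)} := by
  refine ⟨Real.sqrt (∑ i, ∑ j, ‖M i j‖ ^ 2), ?_⟩
  rintro r ⟨x, hx, rfl⟩
  apply Real.sqrt_le_sqrt
  have h := nsq_mulVec_le_frob M x
  have hx' : nsq x = 1 := hx
  rw [hx', mul_one] at h
  exact h

lemma le_specQ (M : Matrix (Fin m) (Fin n) ℍ[ℝ]) {x : Fin n → ℍ[ℝ]} (hx : nsq x = 1) :
    Real.sqrt (nsq (M *ᵥ x)) ≤ specQ M :=
  le_csSup (specQ_bddAbove M) ⟨x, hx, rfl⟩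

lemma specQ_nonneg (M : Matrix (Fin m) (Fin n) ℍ[ℝ]) : 0 ≤ specQ M := by
  rcases Nat.eq_zero_or_pos n with h | h
  · subst h
    have hs : {r : ℝ | ∃ x : Fin 0 → ℍ[ℝ], ∑ i, ‖x i‖ ^ 2 = 1 ∧
        r = Real.sqrt (∑ i, ‖M.mulVec x i‖ ^ 2)} = ∅ := by
      ext r
      simp only [Set.mem_setOf_eq, Set.mem_empty_iff_false, iff_false, not_exists]
      intro x hx
      simp at hx
    rw [specQ, hs, Real.sSup_empty]
  · have hx : nsq (fun j : Fin n => if j = ⟨0, h⟩ then (1 : ℍ[ℝ]) else 0) = 1 := by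
      unfold nsq
      rw [Finset.sum_eq_single ⟨0, h⟩]
      · simp
      · intro b _ hb; simp [hb]
      · simp
    exact (Real.sqrt_nonneg _).trans (le_specQ M hx)

lemma nsq_mulVec_le_spec (M : Matrix (Fin m) (Fin n) ℍ[ℝ]) (x : Fin n → ℍ[ℝ]) :
    nsq (M *ᵥ x) ≤ specQ M ^ 2 * nsq x := by
  by_cases hx : nsq x = 0
  · rw [nsq_eq_zero hx, Matrix.mulVec_zero]
    simp [nsq]
  · have hx' : 0 < nsq x := (nsq_nonneg x).lt_of_ne (Ne.symm hx)
    set c := nsq x with hc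
    set s := Real.sqrt c with hs
    have hspos : 0 < s := Real.sqrt_pos.2 hx'
    have hs2 : s ^ 2 = c := Real.sq_sqrt hx'.le
    have hu : nsq (s⁻¹ • x) = 1 := by
      rw [nsq_smul, inv_pow, hs2, ← hc, inv_mul_cancel₀ hx'.ne']
    have h := le_specQ M hu
    rw [Matrix.mulVec_smul, nsq_smul] at h
    have h2 : s⁻¹ ^ 2 * nsq (M *ᵥ x) ≤ specQ M ^ 2 := by
      have h3 := pow_le_pow_left₀ (Real.sqrt_nonneg _) h 2
      rwa [Real.sq_sqrt (mul_nonneg (by positivity) (nsq_nonneg _))] at h3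
    have h4 := mul_le_mul_of_nonneg_left h2 hx'.le
    rw [inv_pow, hs2] at h4
    calc nsq (M *ᵥ x) = c * (c⁻¹ * nsq (M *ᵥ x)) := by
          rw [← mul_assoc, mul_inv_cancel₀ hx'.ne', one_mul]
      _ ≤ c * specQ M ^ 2 := h4
      _ = specQ M ^ 2 * c := by ring

lemma sqrt_nsq_mulVec_le (M : Matrix (Fin m) (Fin n) ℍ[ℝ]) (x : Fin n → ℍ[ℝ]) :
    Real.sqrt (nsq (M *ᵥ x)) ≤ specQ M * Real.sqrt (nsq x) := by
  have h := Real.sqrt_le_sqrt (nsq_mulVec_le_spec M x)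
  rwa [Real.sqrt_mul (by positivity), Real.sqrt_sq (specQ_nonneg M)] at h

lemma specQ_conjTranspose_le (M : Matrix (Fin m) (Fin n) ℍ[ℝ]) : specQ Mᴴ ≤ specQ M := by
  refine Real.sSup_le ?_ (specQ_nonneg M)
  rintro r ⟨z, hz, rfl⟩
  have hz' : nsq z = 1 := hz
  show Real.sqrt (nsq (Mᴴ *ᵥ z)) ≤ specQ M
  set s := Real.sqrt (nsq (Mᴴ *ᵥ z)) with hsdef
  have hs0 : 0 ≤ s := Real.sqrt_nonneg _
  have hkey : s ^ 2 ≤ specQ M * s := by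
    have h1 : s ^ 2 = qB z (M *ᵥ (Mᴴ *ᵥ z)) := by
      rw [hsdef, Real.sq_sqrt (nsq_nonneg _), qB_adj, ← qB_self]
    calc s ^ 2 = qB z (M *ᵥ (Mᴴ *ᵥ z)) := h1
      _ ≤ Real.sqrt (nsq z) * Real.sqrt (nsq (M *ᵥ (Mᴴ *ᵥ z))) := qB_le _ _
      _ = Real.sqrt (nsq (M *ᵥ (Mᴴ *ᵥ z))) := by rw [hz', Real.sqrt_one, one_mul]
      _ ≤ specQ M * Real.sqrt (nsq (Mᴴ *ᵥ z)) := sqrt_nsq_mulVec_le M _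
      _ = specQ M * s := rfl
  rcases eq_or_lt_of_le hs0 with h | h
  · rw [← h]; exact specQ_nonneg M
  · nlinarith [hkey, h]


set_option maxHeartbeats 2000000 in
lemma key (A : Matrix (Fin m) (Fin n) ℍ[ℝ]) (q : ℕ)
    (S : Matrix (Fin m) (Fin m) ℍ[ℝ]) (hS : Sᴴ = S) (hS2 : S * S = S)
    (x : Fin n → ℍ[ℝ]) (hx : nsq x = 1) :
    Real.sqrt (nsq ((S * A) *ᵥ x)) ^ (2 * q + 1) ≤ specQ (S * ((A * Aᴴ) ^ q * A)) := by
  set T := A * Aᴴ with hT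
  set M := S * (T ^ q * A) with hM
  set y := S *ᵥ (A *ᵥ x) with hy
  have hyy : (S * A) *ᵥ x = y := (Matrix.mulVec_mulVec x S A).symm
  rw [hyy]
  have hc0 : 0 ≤ nsq y := nsq_nonneg y
  by_cases hc : nsq y = 0
  · rw [hc, Real.sqrt_zero, zero_pow (by omega)]
    exact specQ_nonneg M
  have hcpos : 0 < nsq y := hc0.lt_of_ne (Ne.symm hc)
  set c := nsq y with hcdef
  set s := Real.sqrt c with hs
  have hspos : 0 < s := Real.sqrt_pos.2 hcpos
  have hs2 : s ^ 2 = c := Real.sq_sqrt hc0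
  set u := s⁻¹ • y with hu
  have huy : y = s • u := by
    rw [hu, smul_smul, mul_inv_cancel₀ hspos.ne', one_smul]
  have hnu : nsq u = 1 := by
    rw [hu, nsq_smul, inv_pow, hs2, inv_mul_cancel₀ hcpos.ne']
  have hSy : S *ᵥ y = y := by
    rw [hy, Matrix.mulVec_mulVec, hS2]
  have hSu : S *ᵥ u = u := by rw [hu, Matrix.mulVec_smul, hSy]
  set f : ℕ → ℝ := fun j => qB u ((T ^ j) *ᵥ u) with hf
  have hTH : ∀ j : ℕ, (T ^ j)ᴴ = T ^ j := by
    intro j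
    rw [Matrix.conjTranspose_pow, hT, Matrix.conjTranspose_mul,
      Matrix.conjTranspose_conjTranspose]
  have hf0 : f 0 = 1 := by
    show qB u ((T ^ 0) *ᵥ u) = 1
    rw [pow_zero, Matrix.one_mulVec, qB_self, hnu]
  have heven : ∀ i : ℕ, f (2 * i) = nsq ((T ^ i) *ᵥ u) := by
    intro i
    show qB u ((T ^ (2 * i)) *ᵥ u) = _
    rw [show 2 * i = i + i from by ring, pow_add, ← Matrix.mulVec_mulVec, qB_adj, hTH, qB_self]
  have hodd : ∀ i : ℕ, f (2 * i + 1) = nsq (Aᴴ *ᵥ ((T ^ i) *ᵥ u)) := by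
    intro i
    show qB u ((T ^ (2 * i + 1)) *ᵥ u) = _
    have e : T ^ (2 * i + 1) = T ^ i * (A * (Aᴴ * T ^ i)) := by
      rw [show 2 * i + 1 = i + 1 + i from by ring, pow_add, pow_succ, hT]
      simp [Matrix.mul_assoc]
    rw [e]
    simp only [← Matrix.mulVec_mulVec]
    rw [qB_adj, hTH, qB_adj, qB_self]
  have hfnn : ∀ j, 0 ≤ f j := by
    intro j
    rcases Nat.even_or_odd j with ⟨i, hi⟩ | ⟨i, hi⟩
    · rw [hi, show i + i = 2 * i from by ring, heven]; exact nsq_nonneg _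
    · rw [hi, hodd]; exact nsq_nonneg _
  have hlog : ∀ j, f (j + 1) ^ 2 ≤ f j * f (j + 2) := by
    intro j
    rcases Nat.even_or_odd j with ⟨i, hi⟩ | ⟨i, hi⟩
    · subst hi
      rw [show i + i = 2 * i from by ring]
      have h2 : f (2 * i + 1) = qB ((T ^ i) *ᵥ u) ((T ^ (i + 1)) *ᵥ u) := by
        show qB u ((T ^ (2 * i + 1)) *ᵥ u) = _
        rw [show 2 * i + 1 = i + (i + 1) from by ring, pow_add, ← Matrix.mulVec_mulVec,
          qB_adj, hTH]
      calc f (2 * i + 1) ^ 2 = qB ((T ^ i) *ᵥ u) ((T ^ (i + 1)) *ᵥ u) ^ 2 := by rw [h2]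
        _ ≤ nsq ((T ^ i) *ᵥ u) * nsq ((T ^ (i + 1)) *ᵥ u) := qB_sq_le _ _
        _ = f (2 * i) * f (2 * i + 2) := by
            rw [heven i, show 2 * i + 2 = 2 * (i + 1) from by ring, heven (i + 1)]
    · subst hi
      have h2 : f (2 * i + 1 + 1) = qB (Aᴴ *ᵥ ((T ^ i) *ᵥ u)) (Aᴴ *ᵥ ((T ^ (i + 1)) *ᵥ u)) := by
        show qB u ((T ^ (2 * i + 1 + 1)) *ᵥ u) = _
        have e : T ^ (2 * i + 1 + 1) = T ^ i * (A * (Aᴴ * T ^ (i + 1))) := by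
          rw [show 2 * i + 1 + 1 = i + 1 + (i + 1) from by ring, pow_add, pow_succ, hT]
          simp [Matrix.mul_assoc]
        rw [e]
        simp only [← Matrix.mulVec_mulVec]
        rw [qB_adj, hTH, qB_adj]
      calc f (2 * i + 1 + 1) ^ 2
          = qB (Aᴴ *ᵥ ((T ^ i) *ᵥ u)) (Aᴴ *ᵥ ((T ^ (i + 1)) *ᵥ u)) ^ 2 := by rw [h2]
        _ ≤ nsq (Aᴴ *ᵥ ((T ^ i) *ᵥ u)) * nsq (Aᴴ *ᵥ ((T ^ (i + 1)) *ᵥ u)) := qB_sq_le _ _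
        _ = f (2 * i + 1) * f (2 * i + 1 + 2) := by
            rw [hodd i, show 2 * i + 1 + 2 = 2 * (i + 1) + 1 from by ring, hodd (i + 1)]
  have hQ : ∀ j, f 1 * f j ≤ f (j + 1) := by
    intro j
    induction j with
    | zero => rw [hf0, mul_one]
    | succ j ih =>
      by_cases hz : f (j + 1) = 0
      · rw [hz, mul_zero]; exact hfnn _
      · have hpos : 0 < f (j + 1) := (hfnn _).lt_of_ne (Ne.symm hz)
        by_cases hj : f j = 0
        · exfalso
          have h2 := hlog j
          rw [hj, zero_mul] at h2
          nlinarith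
        · have hjpos : 0 < f j := (hfnn j).lt_of_ne (Ne.symm hj)
          have h1 := mul_le_mul_of_nonneg_right ih (hfnn (j + 1))
          have h2 := hlog j
          nlinarith
  have hpowf : ∀ j, f 1 ^ j ≤ f j := by
    intro j
    induction j with
    | zero => rw [pow_zero, hf0]
    | succ j ih =>
      calc f 1 ^ (j + 1) = f 1 * f 1 ^ j := by ring
        _ ≤ f 1 * f j := mul_le_mul_of_nonneg_left ih (hfnn 1)
        _ ≤ f (j + 1) := hQ j
  have hf1 : f 1 = nsq (Aᴴ *ᵥ u) := by
    have h := hodd 0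
    simpa using h
  have hcf1 : c ≤ f 1 := by
    have h1 : c = qB y (A *ᵥ x) := by
      calc c = qB y y := (qB_self y).symm
        _ = qB y (S *ᵥ (A *ᵥ x)) := by rw [← hy]
        _ = qB (Sᴴ *ᵥ y) (A *ᵥ x) := qB_adj _ _ _
        _ = qB y (A *ᵥ x) := by rw [hS, hSy]
    have h2 : c ^ 2 ≤ nsq (Aᴴ *ᵥ y) * nsq x := by
      rw [h1, qB_adj]
      exact qB_sq_le _ _
    rw [hx, mul_one] at h2
    have h3 : nsq (Aᴴ *ᵥ y) = c * f 1 := by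
      rw [hf1, huy, Matrix.mulVec_smul, nsq_smul, hs2]
    rw [h3] at h2
    have h4 : c * c ≤ c * f 1 := by calc c * c = c ^ 2 := (sq c).symm
                                      _ ≤ c * f 1 := h2
    exact le_of_mul_le_mul_left h4 hcpos
  have e2 : T ^ (2 * q + 1) = T ^ q * (A * (Aᴴ * T ^ q)) := by
    rw [show 2 * q + 1 = q + 1 + q from by ring, pow_add, pow_succ, hT]
    simp [Matrix.mul_assoc]
  have hMH : M * Mᴴ = S * (T ^ (2 * q + 1) * S) := by
    calc M * Mᴴ = (S * (T ^ q * A)) * ((T ^ q * A)ᴴ * Sᴴ) := by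
          rw [hM, Matrix.conjTranspose_mul]
      _ = (S * (T ^ q * A)) * ((Aᴴ * T ^ q) * S) := by
          rw [Matrix.conjTranspose_mul, hTH q, hS]
      _ = S * (T ^ (2 * q + 1) * S) := by
          rw [e2]
          simp only [Matrix.mul_assoc]
  have hfk : f (2 * q + 1) ≤ specQ M ^ 2 := by
    have hidM : f (2 * q + 1) = nsq (Mᴴ *ᵥ u) := by
      calc f (2 * q + 1) = qB u ((T ^ (2 * q + 1)) *ᵥ u) := rfl
        _ = qB (S *ᵥ u) ((T ^ (2 * q + 1)) *ᵥ (S *ᵥ u)) := by rw [hSu]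
        _ = qB u ((M * Mᴴ) *ᵥ u) := by
            rw [qB_adj', hS]
            simp only [Matrix.mulVec_mulVec]
            rw [hMH]
        _ = qB (Mᴴ *ᵥ u) (Mᴴ *ᵥ u) := by
            simp only [← Matrix.mulVec_mulVec]
            rw [qB_adj]
        _ = nsq (Mᴴ *ᵥ u) := qB_self _
    rw [hidM]
    calc nsq (Mᴴ *ᵥ u) ≤ specQ Mᴴ ^ 2 * nsq u := nsq_mulVec_le_spec _ _
      _ = specQ Mᴴ ^ 2 := by rw [hnu, mul_one]
      _ ≤ specQ M ^ 2 := pow_le_pow_left₀ (specQ_nonneg _) (specQ_conjTranspose_le M) 2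
  have hrk : (Real.sqrt c ^ (2 * q + 1)) ^ 2 ≤ specQ M ^ 2 := by
    have hsq : (Real.sqrt c ^ (2 * q + 1)) ^ 2 = c ^ (2 * q + 1) := by
      rw [← pow_mul, mul_comm (2 * q + 1) 2, pow_mul, Real.sq_sqrt hc0]
    rw [hsq]
    calc c ^ (2 * q + 1) ≤ f 1 ^ (2 * q + 1) := pow_le_pow_left₀ hc0 hcf1 _
      _ ≤ f (2 * q + 1) := hpowf _
      _ ≤ specQ M ^ 2 := hfk
  exact le_of_pow_le_pow_left₀ two_ne_zero (specQ_nonneg M) hrk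

end Stmt16Aux

theorem stmt16 {m n : ℕ} (A : Matrix (Fin m) (Fin n) ℍ[ℝ]) (q : ℕ)
    (P : Matrix (Fin m) (Fin m) ℍ[ℝ]) (hP : Pᴴ = P) (hP2 : P * P = P) :
    specQ ((1 - P) * A) ≤ specQ ((1 - P) * ((A * Aᴴ) ^ q * A)) ^ ((1 : ℝ) / (2 * q + 1)) := by
  have hS : (1 - P)ᴴ = 1 - P := by
    rw [Matrix.conjTranspose_sub, Matrix.conjTranspose_one, hP]
  have hS2 : (1 - P) * (1 - P) = 1 - P := by
    rw [Matrix.sub_mul, Matrix.one_mul, Matrix.mul_sub, Matrix.mul_one, hP2]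
    abel
  have hβ0 : 0 ≤ specQ ((1 - P) * ((A * Aᴴ) ^ q * A)) := Stmt16Aux.specQ_nonneg _
  refine Real.sSup_le ?_ (Real.rpow_nonneg hβ0 _)
  rintro r ⟨x, hx, rfl⟩
  have hkey := Stmt16Aux.key A q (1 - P) hS hS2 x hx
  have hr0 : 0 ≤ Real.sqrt (Stmt16Aux.nsq (((1 - P) * A) *ᵥ x)) := Real.sqrt_nonneg _
  show Real.sqrt (Stmt16Aux.nsq (((1 - P) * A) *ᵥ x)) ≤
    specQ ((1 - P) * ((A * Aᴴ) ^ q * A)) ^ ((1 : ℝ) / (2 * (q : ℝ) + 1))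
  set r := Real.sqrt (Stmt16Aux.nsq (((1 - P) * A) *ᵥ x)) with hr
  have hcast : ((2 * q + 1 : ℕ) : ℝ) * ((1 : ℝ) / (2 * (q : ℝ) + 1)) = 1 := by
    have h1 : (2 * (q : ℝ) + 1) ≠ 0 := by positivity
    push_cast
    field_simp
  calc r = (r ^ (2 * q + 1 : ℕ)) ^ ((1 : ℝ) / (2 * (q : ℝ) + 1)) := by
        rw [← Real.rpow_natCast r (2 * q + 1), ← Real.rpow_mul hr0, hcast, Real.rpow_one]
    _ ≤ specQ ((1 - P) * ((A * Aᴴ) ^ q * A)) ^ ((1 : ℝ) / (2 * (q : ℝ) + 1)) :=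
        Real.rpow_le_rpow (pow_nonneg hr0 _) hkey (by positivity)

end
end
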